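/- Intertwining identity for the general urn particle system (kernel form of 𝒱Ĝ = G𝒱): Fix an integer c ≥ 1, a vector B ∈ ℕ^c with l := ∑_{u=1}^c B_u ≥ 1, a finitely supported probability vector p^l on the positive integers, and an arbitrary real-valued function h on the set of colorings of length l+b for all b ≥ 1. Then ∑_{b≥1} (p^l(b)/binom(l+b, b+1)) · ∑_{S ⊆ {1,…,l+b}, |S| = b+1} E_{V∼μ_B}[ h(σ(V,S)) ] = ∑_{u=1}^{c} (B_u/l) · ∑_{b≥1} p^l(b) · E_{W∼μ_{θ_{u,b}(B)}}[ h(W) ]. In words: one step of the particle kernel applied to a uniformly chosen coloring with count vector B, followed by evaluating h, has the same expectation as first performing one step of the urn transition from B and then evaluating the μ-average of h at the new count vector. -/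
import Mathlib


open Finset

/-- The count vector of a coloring `V : {1,…,l} → {1,…,c}`:
`Φ(V)_u = #{i ≤ l : V_i = u}`. -/
def countVec {c l : ℕ} (V : Fin l → Fin c) : Fin c → ℕ :=
  fun u => (Finset.univ.filter fun i => V i = u).card

/-- `C_B`: the finite set of colorings of length `l` with count vector `B`. -/
def colorings {c : ℕ} (l : ℕ) (B : Fin c → ℕ) : Finset (Fin l → Fin c) :=
  Finset.univ.filter fun V => countVec V = B

/-- Expectation of `f` under `μ_B`, the uniform probability measure on `C_B`. -/
noncomputable def unifExp {c : ℕ} (l : ℕ) (B : Fin c → ℕ)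
    (f : (Fin l → Fin c) → ℝ) : ℝ :=
  (∑ V ∈ colorings l B, f V) / (colorings l B).card

/-- `θ_{u,b}(B)`: the vector obtained from `B` by adding `b` to its `u`-th coordinate. -/
def theta {c : ℕ} (B : Fin c → ℕ) (u : Fin c) (b : ℕ) : Fin c → ℕ :=
  Function.update B u (B u + b)

/-- The rank of position `j` among the positions not in `S'`: `#{i ∉ S' : i < j}`. -/
def rankInCompl {m : ℕ} (S' : Finset (Fin m)) (j : Fin m) : ℕ :=
  ((S'ᶜ).filter fun i => i < j).card

/-- `σ^u_{S'}(V)`: the coloring of length `m` whose positions in `S'` all carry color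
`u` and whose remaining positions carry, in increasing order of position, the colors
`V_1, …, V_l` (meaningful when `l = m - |S'|`). -/
def sigmaIns {c : ℕ} [NeZero c] {m l : ℕ} (u : Fin c) (S' : Finset (Fin m))
    (V : Fin l → Fin c) : Fin m → Fin c := fun j =>
  if j ∈ S' then u
  else if h : rankInCompl S' j < l then V ⟨rankInCompl S' j, h⟩ else default

/-- `σ(V,S) := σ^u_{S∖{min S}}(V)` where `u = V_{min S}` (meaningful when `V` has
length `l`, `S ⊆ {1,…,l+b}` and `|S| = b+1`, in which case `min S ≤ l`). -/
def sigmaStep {c : ℕ} [NeZero c] {l m : ℕ} (V : Fin l → Fin c)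
    (S : Finset (Fin m)) : Fin m → Fin c :=
  if hS : S.Nonempty then
    sigmaIns (if h : ((S.min' hS : Fin m) : ℕ) < l then V ⟨(S.min' hS : Fin m), h⟩
              else default)
      (S.erase (S.min' hS)) V
  else fun _ => default

section Aux

variable {c m l : ℕ} [NeZero c]

lemma rankInCompl_lt (S' : Finset (Fin m)) (hc : S'ᶜ.card = l) {j : Fin m}
    (hj : j ∉ S') : rankInCompl S' j < l := by
  have hjc : j ∈ S'ᶜ := Finset.mem_compl.2 hj
  have hsub : (S'ᶜ).filter (fun i => i < j) ⊆ (S'ᶜ).erase j := by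
    intro i hi
    simp only [mem_filter] at hi
    exact Finset.mem_erase.2 ⟨ne_of_lt hi.2, hi.1⟩
  have h1 := Finset.card_le_card hsub
  rw [Finset.card_erase_of_mem hjc, hc] at h1
  have h2 : 1 ≤ l := hc ▸ Finset.card_pos.2 ⟨j, hjc⟩
  unfold rankInCompl
  omega

lemma rankInCompl_orderEmbOfFin (S' : Finset (Fin m)) (hc : S'ᶜ.card = l) (k : Fin l) :
    rankInCompl S' ((S'ᶜ).orderEmbOfFin hc k) = k := by
  unfold rankInCompl
  have hEq : (S'ᶜ).filter (fun i => i < (S'ᶜ).orderEmbOfFin hc k)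
      = (Finset.Iio k).image ((S'ᶜ).orderEmbOfFin hc) := by
    ext j
    simp only [mem_filter, mem_image, Finset.mem_Iio]
    constructor
    · rintro ⟨hj1, hj2⟩
      have hj1' : j ∈ Set.range ((S'ᶜ).orderEmbOfFin hc) := by
        rw [Finset.range_orderEmbOfFin]; exact hj1
      obtain ⟨i, rfl⟩ := hj1'
      exact ⟨i, ((S'ᶜ).orderEmbOfFin hc).lt_iff_lt.1 hj2, rfl⟩
    · rintro ⟨i, hik, rfl⟩
      exact ⟨Finset.orderEmbOfFin_mem _ hc i, ((S'ᶜ).orderEmbOfFin hc).lt_iff_lt.2 hik⟩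
  rw [hEq, Finset.card_image_of_injective _ ((S'ᶜ).orderEmbOfFin hc).injective,
    Fin.card_Iio]

lemma orderEmbOfFin_rankInCompl (S' : Finset (Fin m)) (hc : S'ᶜ.card = l) {j : Fin m}
    (hj : j ∉ S') :
    (S'ᶜ).orderEmbOfFin hc ⟨rankInCompl S' j, rankInCompl_lt S' hc hj⟩ = j := by
  have hj1' : j ∈ Set.range ((S'ᶜ).orderEmbOfFin hc) := by
    rw [Finset.range_orderEmbOfFin]; exact Finset.mem_compl.2 hj
  obtain ⟨k, rfl⟩ := hj1'
  exact congrArg _ (Fin.ext (rankInCompl_orderEmbOfFin S' hc k))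

lemma sigmaIns_apply_mem (u : Fin c) (S' : Finset (Fin m)) (V : Fin l → Fin c)
    {j : Fin m} (hj : j ∈ S') : sigmaIns u S' V j = u := by
  simp [sigmaIns, hj]

lemma sigmaIns_apply_notMem (u : Fin c) (S' : Finset (Fin m)) (hc : S'ᶜ.card = l)
    (V : Fin l → Fin c) {j : Fin m} (hj : j ∉ S') :
    sigmaIns u S' V j = V ⟨rankInCompl S' j, rankInCompl_lt S' hc hj⟩ := by
  rw [sigmaIns, if_neg hj, dif_pos (rankInCompl_lt S' hc hj)]

def del {c : ℕ} [NeZero c] {m : ℕ} (l : ℕ) (S' : Finset (Fin m)) (W : Fin m → Fin c) :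
    Fin l → Fin c :=
  if hc : S'ᶜ.card = l then fun k => W ((S'ᶜ).orderEmbOfFin hc k) else fun _ => default

lemma del_sigmaIns (u : Fin c) (S' : Finset (Fin m)) (hc : S'ᶜ.card = l)
    (V : Fin l → Fin c) : del l S' (sigmaIns u S' V) = V := by
  funext k
  rw [del, dif_pos hc]
  have hmem : (S'ᶜ).orderEmbOfFin hc k ∉ S' :=
    Finset.mem_compl.1 (Finset.orderEmbOfFin_mem _ hc k)
  rw [sigmaIns_apply_notMem u S' hc V hmem]
  exact congrArg V (Fin.ext (rankInCompl_orderEmbOfFin S' hc k))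

lemma sigmaIns_del (u : Fin c) (S' : Finset (Fin m)) (hc : S'ᶜ.card = l)
    {W : Fin m → Fin c} (hW : ∀ j ∈ S', W j = u) :
    sigmaIns u S' (del (c := c) l S' W) = W := by
  funext j
  by_cases hj : j ∈ S'
  · rw [sigmaIns_apply_mem u S' _ hj, hW j hj]
  · rw [sigmaIns_apply_notMem u S' hc _ hj, del, dif_pos hc,
      orderEmbOfFin_rankInCompl S' hc hj]

lemma countVec_sigmaIns (u : Fin c) (S' : Finset (Fin m)) (hc : S'ᶜ.card = l)
    (V : Fin l → Fin c) (v : Fin c) :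
    countVec (sigmaIns u S' V) v = countVec V v + (if v = u then S'.card else 0) := by
  unfold countVec
  have hsplit : (univ.filter fun j => sigmaIns u S' V j = v)
      = (S'.filter fun j => sigmaIns u S' V j = v)
        ∪ ((S'ᶜ).filter fun j => sigmaIns u S' V j = v) := by
    rw [← Finset.filter_union, Finset.union_compl]
  rw [hsplit, Finset.card_union_of_disjoint
    (Finset.disjoint_filter_filter disjoint_compl_right)]
  have h2 : ((S'ᶜ).filter fun j => sigmaIns u S' V j = v).card
      = (univ.filter fun k => V k = v).card := by
    refine Finset.card_bij'
      (fun j hj => (⟨rankInCompl S' j,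
        rankInCompl_lt S' hc (Finset.mem_compl.1 (Finset.mem_filter.1 hj).1)⟩ : Fin l))
      (fun k _ => (S'ᶜ).orderEmbOfFin hc k) ?_ ?_ ?_ ?_
    · intro a ha
      have ha' := Finset.mem_filter.1 ha
      have hna : a ∉ S' := Finset.mem_compl.1 ha'.1
      refine Finset.mem_filter.2 ⟨Finset.mem_univ _, ?_⟩
      exact (sigmaIns_apply_notMem u S' hc V hna).symm.trans ha'.2
    · intro k hk
      refine Finset.mem_filter.2 ⟨Finset.orderEmbOfFin_mem _ hc k, ?_⟩
      rw [sigmaIns_apply_notMem u S' hc V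
        (Finset.mem_compl.1 (Finset.orderEmbOfFin_mem _ hc k))]
      refine (congrArg V (Fin.ext (rankInCompl_orderEmbOfFin S' hc k))).trans ?_
      exact (Finset.mem_filter.1 hk).2
    · intro a ha
      exact orderEmbOfFin_rankInCompl S' hc (Finset.mem_compl.1 (Finset.mem_filter.1 ha).1)
    · intro k hk
      exact Fin.ext (rankInCompl_orderEmbOfFin S' hc k)
  rw [h2, add_comm]
  congr 1
  by_cases hv : v = u
  · subst hv
    rw [if_pos rfl]
    rw [Finset.filter_true_of_mem fun j hj => sigmaIns_apply_mem v S' V hj]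
  · rw [if_neg hv, Finset.card_eq_zero, Finset.filter_eq_empty_iff]
    intro j hj
    rw [sigmaIns_apply_mem u S' V hj]
    exact fun hvu => hv hvu.symm

end Aux
section Aux2

variable {c m l : ℕ} [NeZero c]

lemma countVec_comp_equiv (V : Fin l → Fin c) (e : Fin l ≃ Fin l) (v : Fin c) :
    countVec (fun k => V (e k)) v = countVec V v := by
  unfold countVec
  refine Finset.card_bij' (fun k _ => e k) (fun k _ => e.symm k) ?_ ?_ ?_ ?_
  · intro a ha
    exact Finset.mem_filter.2 ⟨Finset.mem_univ _, (Finset.mem_filter.1 ha).2⟩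
  · intro a ha
    refine Finset.mem_filter.2 ⟨Finset.mem_univ _, ?_⟩
    show V (e (e.symm a)) = v
    rw [e.apply_symm_apply]
    exact (Finset.mem_filter.1 ha).2
  · intro a _; exact e.symm_apply_apply a
  · intro a _; exact e.apply_symm_apply a

lemma colorings_nonempty (l : ℕ) (B : Fin c → ℕ) (hl : l = ∑ u, B u) :
    (colorings l B).Nonempty := by
  have hcard : Fintype.card (Σ u : Fin c, Fin (B u)) = Fintype.card (Fin l) := by
    simp [Fintype.card_sigma, hl]
  let e : (Σ u : Fin c, Fin (B u)) ≃ Fin l := Fintype.equivOfCardEq hcard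
  refine ⟨fun k => (e.symm k).1, ?_⟩
  simp only [colorings, Finset.mem_filter, Finset.mem_univ, true_and]
  funext u
  show (Finset.univ.filter fun k => (e.symm k).1 = u).card = B u
  rw [← Fintype.card_subtype]
  let e2 : {k : Fin l // (e.symm k).1 = u} ≃ {x : Σ v : Fin c, Fin (B v) // x.1 = u} :=
    e.symm.subtypeEquiv fun k => Iff.rfl
  let e3 : {x : Σ v : Fin c, Fin (B v) // x.1 = u} ≃ Fin (B u) :=
    { toFun := fun x => Fin.cast (congrArg B x.2) x.1.2
      invFun := fun k => ⟨⟨u, k⟩, rfl⟩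
      left_inv := by
        rintro ⟨⟨v, k⟩, hv⟩
        simp only at hv
        subst hv
        rfl
      right_inv := fun k => rfl }
  rw [Fintype.card_congr (e2.trans e3), Fintype.card_fin]

lemma card_colorings_filter_pos (B : Fin c → ℕ) (j j' : Fin l) (u : Fin c) :
    ((colorings l B).filter fun V => V j = u).card
      = ((colorings l B).filter fun V => V j' = u).card := by
  refine Finset.card_bij' (fun V _ => fun k => V (Equiv.swap j j' k))
    (fun V _ => fun k => V (Equiv.swap j j' k)) ?_ ?_ ?_ ?_
  · intro V hV
    obtain ⟨hV1, hV2⟩ := Finset.mem_filter.1 hV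
    refine Finset.mem_filter.2 ⟨?_, ?_⟩
    · simp only [colorings, Finset.mem_filter, Finset.mem_univ, true_and] at hV1 ⊢
      rw [← hV1]
      funext v
      exact countVec_comp_equiv V (Equiv.swap j j') v
    · show V (Equiv.swap j j' j') = u
      rw [Equiv.swap_apply_right]; exact hV2
  · intro V hV
    obtain ⟨hV1, hV2⟩ := Finset.mem_filter.1 hV
    refine Finset.mem_filter.2 ⟨?_, ?_⟩
    · simp only [colorings, Finset.mem_filter, Finset.mem_univ, true_and] at hV1 ⊢
      rw [← hV1]
      funext v
      exact countVec_comp_equiv V (Equiv.swap j j') v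
    · show V (Equiv.swap j j' j) = u
      rw [Equiv.swap_apply_left]; exact hV2
  · intro V _; funext k
    show V (Equiv.swap j j' (Equiv.swap j j' k)) = V k
    rw [Equiv.swap_apply_self]
  · intro V _; funext k
    show V (Equiv.swap j j' (Equiv.swap j j' k)) = V k
    rw [Equiv.swap_apply_self]

lemma card_filter_mul (B : Fin c → ℕ) (j : Fin l) (u : Fin c) :
    ((colorings l B).filter fun V => V j = u).card * l
      = B u * (colorings l B).card := by
  have key : ∑ j' : Fin l, ((colorings l B).filter fun V => V j' = u).card
      = B u * (colorings l B).card := by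
    have h1 : ∀ j' : Fin l, ((colorings l B).filter fun V => V j' = u).card
        = ∑ V ∈ colorings l B, if V j' = u then 1 else 0 :=
      fun j' => Finset.card_filter _ _
    simp only [h1]
    rw [Finset.sum_comm]
    have h2 : ∀ V ∈ colorings l B, (∑ j' : Fin l, if V j' = u then 1 else 0) = B u := by
      intro V hV
      have hV' : countVec V = B := by
        simpa only [colorings, Finset.mem_filter, Finset.mem_univ, true_and] using hV
      rw [← hV']
      show _ = (Finset.univ.filter fun i => V i = u).card
      rw [Finset.card_filter]
    rw [Finset.sum_congr rfl h2, Finset.sum_const, smul_eq_mul, mul_comm]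
  rw [← key, Finset.sum_congr rfl fun j' _ => card_colorings_filter_pos B j' j u,
    Finset.sum_const, Finset.card_univ, Fintype.card_fin, smul_eq_mul, mul_comm]

lemma theta_apply_self (B : Fin c → ℕ) (u : Fin c) (b : ℕ) : theta B u b u = B u + b :=
  Function.update_self u _ B

lemma theta_apply_ne (B : Fin c → ℕ) {u v : Fin c} (b : ℕ) (h : v ≠ u) :
    theta B u b v = B v := Function.update_of_ne h _ B

lemma theta_inj (B : Fin c → ℕ) {b : ℕ} (hb : 1 ≤ b) {u v : Fin c}
    (h : theta B u b = theta B v b) : u = v := by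
  by_contra hne
  have h1 := congrFun h u
  rw [theta_apply_self, theta_apply_ne B b hne] at h1
  omega

lemma sum_theta (B : Fin c → ℕ) (u : Fin c) (b : ℕ) :
    ∑ v, theta B u b v = (∑ v, B v) + b := by
  rw [theta, Finset.sum_update_of_mem (Finset.mem_univ u),
    Finset.sdiff_singleton_eq_erase]
  have := Finset.add_sum_erase Finset.univ B (Finset.mem_univ u)
  omega

lemma min'_lt_of_card {b : ℕ} (S : Finset (Fin (l + b))) (hS : S.Nonempty)
    (hcard : S.card = b + 1) : ((S.min' hS : Fin (l + b)) : ℕ) < l := by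
  have h1 : S ⊆ Finset.Ici (S.min' hS) := fun j hj => Finset.mem_Ici.2 (S.min'_le j hj)
  have h2 := Finset.card_le_card h1
  rw [Fin.card_Ici, hcard] at h2
  have h3 := (S.min' hS).isLt
  omega

lemma rank_min' (S : Finset (Fin m)) (hS : S.Nonempty) :
    rankInCompl (S.erase (S.min' hS)) (S.min' hS) = ((S.min' hS : Fin m) : ℕ) := by
  unfold rankInCompl
  have hEq : ((S.erase (S.min' hS))ᶜ).filter (fun i => i < S.min' hS)
      = Finset.Iio (S.min' hS) := by
    ext i
    simp only [Finset.mem_filter, Finset.mem_compl, Finset.mem_erase, Finset.mem_Iio]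
    constructor
    · exact fun hx => hx.2
    · intro hi
      refine ⟨fun hc' => ?_, hi⟩
      exact absurd (S.min'_le i hc'.2) (not_le.2 hi)
  rw [hEq, Fin.card_Iio]

lemma sigmaStep_eq (V : Fin l → Fin c) (S : Finset (Fin m)) (hS : S.Nonempty)
    (hlt : ((S.min' hS : Fin m) : ℕ) < l) :
    sigmaStep V S = sigmaIns (V ⟨(S.min' hS : Fin m), hlt⟩) (S.erase (S.min' hS)) V := by
  rw [sigmaStep, dif_pos hS, dif_pos hlt]

lemma erase_min'_compl_card {b : ℕ} (S : Finset (Fin (l + b))) (hS : S.Nonempty)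
    (hcard : S.card = b + 1) : ((S.erase (S.min' hS))ᶜ).card = l := by
  rw [Finset.card_compl, Finset.card_erase_of_mem (S.min'_mem hS), hcard,
    Fintype.card_fin]
  omega

lemma sigmaStep_on_S {b : ℕ} {S : Finset (Fin (l + b))} (hS : S.Nonempty)
    (hcard : S.card = b + 1) (hlt : ((S.min' hS : Fin (l + b)) : ℕ) < l)
    (V : Fin l → Fin c) {j : Fin (l + b)} (hj : j ∈ S) :
    sigmaStep V S j = V ⟨(S.min' hS : Fin (l + b)), hlt⟩ := by
  rw [sigmaStep_eq V S hS hlt]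
  by_cases hje : j ∈ S.erase (S.min' hS)
  · exact sigmaIns_apply_mem _ _ _ hje
  · have hjm : j = S.min' hS := by
      by_contra hne
      exact hje (Finset.mem_erase.2 ⟨hne, hj⟩)
    subst hjm
    rw [sigmaIns_apply_notMem _ _ (erase_min'_compl_card S hS hcard) V
      (Finset.notMem_erase _ S)]
    exact congrArg V (Fin.ext (rank_min' S hS))

end Aux2
section Aux3

variable {c : ℕ} [NeZero c]

/-- Total version of `min'`. -/
def minD {m : ℕ} [NeZero m] (S : Finset (Fin m)) : Fin m :=
  if h : S.Nonempty then S.min' h else default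

lemma minD_eq {m : ℕ} [NeZero m] (S : Finset (Fin m)) (h : S.Nonempty) :
    minD S = S.min' h := dif_pos h

lemma countVec_sigmaStep {l b : ℕ} (B : Fin c → ℕ) {S : Finset (Fin (l + b))}
    (hS : S.Nonempty) (hcard : S.card = b + 1)
    (hlt : ((S.min' hS : Fin (l + b)) : ℕ) < l)
    {V : Fin l → Fin c} (hV : countVec V = B) :
    countVec (sigmaStep V S) = theta B (V ⟨(S.min' hS : Fin (l + b)), hlt⟩) b := by
  rw [sigmaStep_eq V S hS hlt]
  funext v
  rw [countVec_sigmaIns _ _ (erase_min'_compl_card S hS hcard) V v, hV,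
    Finset.card_erase_of_mem (S.min'_mem hS), hcard]
  by_cases hv : v = V ⟨(S.min' hS : Fin (l + b)), hlt⟩
  · subst hv
    rw [if_pos rfl, theta_apply_self]
    omega
  · rw [if_neg hv, theta_apply_ne B b hv, Nat.add_zero]

/-- The main bijection lemma. -/
lemma ML {l : ℕ} (B : Fin c → ℕ) (b : ℕ) (hl1 : 1 ≤ l)
    (H : (Fin (l + b) → Fin c) → ℝ) :
    ∑ S ∈ (Finset.univ : Finset (Fin (l + b))).powersetCard (b + 1),
        ∑ V ∈ colorings l B, H (sigmaStep V S)
      = ∑ u : Fin c, (((B u + b).choose (b + 1) : ℕ) : ℝ) *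
          ∑ W ∈ colorings (l + b) (theta B u b), H W := by
  haveI : NeZero (l + b) := ⟨by omega⟩
  classical
  set g : Finset (Fin (l + b)) × (Fin l → Fin c) → Fin c := fun x =>
    if hS : x.1.Nonempty then
      (if h : ((x.1.min' hS : Fin (l + b)) : ℕ) < l then x.2 ⟨(x.1.min' hS : Fin (l + b)), h⟩
       else default)
    else default with hg
  rw [← Finset.sum_product']
  rw [← Finset.sum_fiberwise_of_maps_to (g := g) (t := Finset.univ)
    (fun x _ => Finset.mem_univ (g x))]
  refine Finset.sum_congr rfl fun u _ => ?_
  have hsig : (((B u + b).choose (b + 1) : ℕ) : ℝ) *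
        ∑ W ∈ colorings (l + b) (theta B u b), H W
      = ∑ y ∈ (colorings (l + b) (theta B u b)).sigma
          (fun W => (Finset.univ.filter fun j => W j = u).powersetCard (b + 1)),
          H y.1 := by
    rw [Finset.sum_sigma, Finset.mul_sum]
    refine Finset.sum_congr rfl fun W hW => ?_
    have hWu : (Finset.univ.filter fun j => W j = u).card = B u + b := by
      have hWc : countVec W = theta B u b := by
        simpa only [colorings, Finset.mem_filter, Finset.mem_univ, true_and] using hW
      have := congrFun hWc u
      rw [theta_apply_self] at this
      exact this
    have h0 : (∑ _s ∈ (Finset.univ.filter fun j => W j = u).powersetCard (b + 1), H W)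
        = (((B u + b).choose (b + 1) : ℕ) : ℝ) * H W := by
      rw [Finset.sum_const, Finset.card_powersetCard, hWu, nsmul_eq_mul]
    exact h0.symm.trans (Finset.sum_congr rfl fun s _ => rfl)
  rw [hsig]
  refine Finset.sum_nbij'
    (i := fun x => (⟨sigmaStep x.2 x.1, x.1⟩ :
      Σ _ : Fin (l + b) → Fin c, Finset (Fin (l + b))))
    (j := fun y => (y.2, del l (y.2.erase (minD y.2)) y.1)) ?_ ?_ ?_ ?_ ?_
  · -- forward membership
    rintro ⟨S, V⟩ hx
    obtain ⟨hmem, hgu⟩ := Finset.mem_filter.1 hx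
    obtain ⟨hP, hC⟩ := Finset.mem_product.1 hmem
    have hcard : S.card = b + 1 := (Finset.mem_powersetCard_univ).1 hP
    have hS : S.Nonempty := Finset.card_pos.1 (by omega)
    have hlt : ((S.min' hS : Fin (l + b)) : ℕ) < l := min'_lt_of_card S hS hcard
    have hV : countVec V = B := by
      simpa only [colorings, Finset.mem_filter, Finset.mem_univ, true_and] using hC
    have hgu' : V ⟨(S.min' hS : Fin (l + b)), hlt⟩ = u := by
      rw [hg] at hgu
      simpa only [dif_pos hS, dif_pos hlt] using hgu
    refine Finset.mem_sigma.2 ⟨?_, ?_⟩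
    · simp only [colorings, Finset.mem_filter, Finset.mem_univ, true_and]
      rw [countVec_sigmaStep B hS hcard hlt hV, hgu']
    · refine Finset.mem_powersetCard.2 ⟨?_, hcard⟩
      intro j hj
      replace hj : j ∈ S := hj
      refine Finset.mem_filter.2 ⟨Finset.mem_univ _, ?_⟩
      show sigmaStep V S j = u
      rw [sigmaStep_on_S hS hcard hlt V hj, hgu']
  · -- backward membership
    rintro ⟨W, S⟩ hy
    obtain ⟨hW, hSm⟩ := Finset.mem_sigma.1 hy
    obtain ⟨hsub, hcard⟩ := Finset.mem_powersetCard.1 hSm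
    replace hcard : S.card = b + 1 := hcard
    replace hsub : S ⊆ Finset.univ.filter fun j => W j = u := hsub
    replace hW : W ∈ colorings (l + b) (theta B u b) := hW
    have hS : S.Nonempty := Finset.card_pos.1 (by omega)
    have hWc : countVec W = theta B u b := by
      simpa only [colorings, Finset.mem_filter, Finset.mem_univ, true_and] using hW
    have hWu : ∀ j ∈ S, W j = u := fun j hj => (Finset.mem_filter.1 (hsub hj)).2
    have hcompl := erase_min'_compl_card S hS hcard
    show (S, del l (S.erase (minD S)) W) ∈ _
    rw [minD_eq S hS]
    set V : Fin l → Fin c := del l (S.erase (S.min' hS)) W with hVdef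
    have hins : sigmaIns u (S.erase (S.min' hS)) V = W :=
      sigmaIns_del u _ hcompl (fun j hj => hWu j (Finset.mem_of_mem_erase hj))
    have hV : countVec V = B := by
      funext v
      have h1 := congrFun hWc v
      rw [← hins, countVec_sigmaIns _ _ hcompl V v,
        Finset.card_erase_of_mem (S.min'_mem hS), hcard] at h1
      by_cases hv : v = u
      · subst hv
        rw [theta_apply_self, if_pos rfl] at h1
        omega
      · rw [theta_apply_ne B b hv, if_neg hv] at h1
        omega
    refine Finset.mem_filter.2 ⟨Finset.mem_product.2 ⟨?_, ?_⟩, ?_⟩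
    · exact Finset.mem_powersetCard_univ.2 hcard
    · simp only [colorings, Finset.mem_filter, Finset.mem_univ, true_and]
      exact hV
    · -- g value is u
      have hlt : ((S.min' hS : Fin (l + b)) : ℕ) < l := min'_lt_of_card S hS hcard
      have hVmin : V ⟨(S.min' hS : Fin (l + b)), hlt⟩ = u := by
        rw [hVdef]
        show del l (S.erase (S.min' hS)) W ⟨(S.min' hS : Fin (l + b)), hlt⟩ = u
        rw [del, dif_pos hcompl]
        have hnm : (S.min' hS) ∉ S.erase (S.min' hS) := Finset.notMem_erase _ S
        have : ((S.erase (S.min' hS))ᶜ).orderEmbOfFin hcompl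
            ⟨(S.min' hS : Fin (l + b)), hlt⟩
            = S.min' hS := by
          have h2 := orderEmbOfFin_rankInCompl (S.erase (S.min' hS)) hcompl hnm
          have hidx : (⟨rankInCompl (S.erase (S.min' hS)) (S.min' hS),
              rankInCompl_lt _ hcompl hnm⟩ : Fin l)
              = ⟨((S.min' hS : Fin (l + b)) : ℕ), hlt⟩ := Fin.ext (rank_min' S hS)
          rw [← hidx]
          exact h2
        rw [this]
        exact hWu _ (S.min'_mem hS)
      show g (S, V) = u
      rw [hg]
      simpa only [dif_pos hS, dif_pos hlt] using hVmin
  · -- left inverse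
    rintro ⟨S, V⟩ hx
    obtain ⟨hmem, _⟩ := Finset.mem_filter.1 hx
    obtain ⟨hP, hC⟩ := Finset.mem_product.1 hmem
    have hcard : S.card = b + 1 := (Finset.mem_powersetCard_univ).1 hP
    have hS : S.Nonempty := Finset.card_pos.1 (by omega)
    have hlt : ((S.min' hS : Fin (l + b)) : ℕ) < l := min'_lt_of_card S hS hcard
    have hcompl := erase_min'_compl_card S hS hcard
    show (S, del l (S.erase (minD S)) (sigmaStep V S)) = (S, V)
    rw [minD_eq S hS, sigmaStep_eq V S hS hlt,
      del_sigmaIns _ _ hcompl V]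
  · -- right inverse
    rintro ⟨W, S⟩ hy
    obtain ⟨hW, hSm⟩ := Finset.mem_sigma.1 hy
    obtain ⟨hsub, hcard⟩ := Finset.mem_powersetCard.1 hSm
    replace hcard : S.card = b + 1 := hcard
    replace hsub : S ⊆ Finset.univ.filter fun j => W j = u := hsub
    have hS : S.Nonempty := Finset.card_pos.1 (by omega)
    have hWu : ∀ j ∈ S, W j = u := fun j hj => (Finset.mem_filter.1 (hsub hj)).2
    have hcompl := erase_min'_compl_card S hS hcard
    have hlt : ((S.min' hS : Fin (l + b)) : ℕ) < l := min'_lt_of_card S hS hcard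
    show (⟨sigmaStep (del l (S.erase (minD S)) W) S, S⟩ :
        Σ _ : Fin (l + b) → Fin c, Finset (Fin (l + b))) = ⟨W, S⟩
    rw [minD_eq S hS]
    set V : Fin l → Fin c := del l (S.erase (S.min' hS)) W with hVdef
    have hins : sigmaIns u (S.erase (S.min' hS)) V = W :=
      sigmaIns_del u _ hcompl (fun j hj => hWu j (Finset.mem_of_mem_erase hj))
    have hVmin : V ⟨(S.min' hS : Fin (l + b)), hlt⟩ = u := by
      rw [hVdef]
      show del l (S.erase (S.min' hS)) W ⟨(S.min' hS : Fin (l + b)), hlt⟩ = u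
      rw [del, dif_pos hcompl]
      have hnm : (S.min' hS) ∉ S.erase (S.min' hS) := Finset.notMem_erase _ S
      have h3 : ((S.erase (S.min' hS))ᶜ).orderEmbOfFin hcompl
          ⟨(S.min' hS : Fin (l + b)), hlt⟩ = S.min' hS := by
        have h2 := orderEmbOfFin_rankInCompl (S.erase (S.min' hS)) hcompl hnm
        have hidx : (⟨rankInCompl (S.erase (S.min' hS)) (S.min' hS),
            rankInCompl_lt _ hcompl hnm⟩ : Fin l)
            = ⟨((S.min' hS : Fin (l + b)) : ℕ), hlt⟩ := Fin.ext (rank_min' S hS)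
        rw [← hidx]
        exact h2
      rw [h3]
      exact hWu _ (S.min'_mem hS)
    show (⟨sigmaStep V S, S⟩ : Σ _ : Fin (l + b) → Fin c, Finset (Fin (l + b)))
        = ⟨W, S⟩
    have : sigmaStep V S = W := by
      rw [sigmaStep_eq V S hS hlt, hVmin, hins]
    rw [this]
  · -- values agree
    rintro ⟨S, V⟩ _
    rfl

end Aux3
section Aux4

variable {c : ℕ} [NeZero c]

lemma scalar_id (B : Fin c → ℕ) (l b : ℕ) (hl : l = ∑ u, B u) (hl1 : 1 ≤ l)
    (hb : 1 ≤ b) (u0 : Fin c) :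
    (((B u0 + b).choose (b + 1) : ℕ) : ℝ) * ((colorings (l + b) (theta B u0 b)).card : ℝ)
      * (l : ℝ)
    = (((l + b).choose (b + 1) : ℕ) : ℝ) * ((B u0 : ℕ) : ℝ) * ((colorings l B).card : ℝ) := by
  classical
  haveI : NeZero (l + b) := ⟨by omega⟩
  set j0 : Fin l := ⟨0, hl1⟩ with hj0
  have hML := ML B b hl1 (fun W => if countVec W = theta B u0 b then (1 : ℝ) else 0)
  -- simplify LHS of hML
  have hL : ∀ S ∈ (Finset.univ : Finset (Fin (l + b))).powersetCard (b + 1),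
      (∑ V ∈ colorings l B,
        if countVec (sigmaStep V S) = theta B u0 b then (1 : ℝ) else 0)
      = (((colorings l B).filter fun V => V j0 = u0).card : ℝ) := by
    intro S hSm
    have hcard : S.card = b + 1 := Finset.mem_powersetCard_univ.1 hSm
    have hS : S.Nonempty := Finset.card_pos.1 (by omega)
    have hlt : ((S.min' hS : Fin (l + b)) : ℕ) < l := min'_lt_of_card S hS hcard
    have step : ∀ V ∈ colorings l B,
        (if countVec (sigmaStep V S) = theta B u0 b then (1 : ℝ) else 0)
        = (if V ⟨(S.min' hS : Fin (l + b)), hlt⟩ = u0 then (1 : ℝ) else 0) := by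
      intro V hV
      have hVB : countVec V = B := by
        simpa only [colorings, Finset.mem_filter, Finset.mem_univ, true_and] using hV
      rw [countVec_sigmaStep B hS hcard hlt hVB]
      congr 1
      simp only [eq_iff_iff]
      exact ⟨fun hth => by rw [theta_inj B hb hth], fun hv => by rw [hv]⟩
    rw [Finset.sum_congr rfl step, Finset.sum_boole]
    rw [card_colorings_filter_pos B ⟨(S.min' hS : Fin (l + b)), hlt⟩ j0 u0]
  have hLHS : ∑ S ∈ (Finset.univ : Finset (Fin (l + b))).powersetCard (b + 1),
      (∑ V ∈ colorings l B,
        if countVec (sigmaStep V S) = theta B u0 b then (1 : ℝ) else 0)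
      = (((l + b).choose (b + 1) : ℕ) : ℝ)
        * (((colorings l B).filter fun V => V j0 = u0).card : ℝ) := by
    rw [Finset.sum_congr rfl hL, Finset.sum_const, Finset.card_powersetCard,
      Finset.card_univ, Fintype.card_fin, nsmul_eq_mul]
  -- simplify RHS of hML
  have hR : ∀ u : Fin c,
      (((B u + b).choose (b + 1) : ℕ) : ℝ) * ∑ W ∈ colorings (l + b) (theta B u b),
        (if countVec W = theta B u0 b then (1 : ℝ) else 0)
      = if u = u0 then (((B u0 + b).choose (b + 1) : ℕ) : ℝ)
          * ((colorings (l + b) (theta B u0 b)).card : ℝ) else 0 := by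
    intro u
    have hinner : ∀ W ∈ colorings (l + b) (theta B u b),
        (if countVec W = theta B u0 b then (1 : ℝ) else 0)
        = (if u = u0 then (1 : ℝ) else 0) := by
      intro W hW
      have hWc : countVec W = theta B u b := by
        simpa only [colorings, Finset.mem_filter, Finset.mem_univ, true_and] using hW
      rw [hWc]
      congr 1
      simp only [eq_iff_iff]
      exact ⟨fun hth => theta_inj B hb hth, fun hv => by rw [hv]⟩
    rw [Finset.sum_congr rfl hinner]
    by_cases hu : u = u0
    · subst hu
      rw [if_pos rfl, if_pos rfl]
      rw [Finset.sum_const, nsmul_eq_mul, mul_one]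
    · rw [if_neg hu, if_neg hu]
      simp
  have hRHS : ∑ u : Fin c, (((B u + b).choose (b + 1) : ℕ) : ℝ)
        * ∑ W ∈ colorings (l + b) (theta B u b),
          (if countVec W = theta B u0 b then (1 : ℝ) else 0)
      = (((B u0 + b).choose (b + 1) : ℕ) : ℝ)
        * ((colorings (l + b) (theta B u0 b)).card : ℝ) := by
    rw [Finset.sum_congr rfl fun u _ => hR u, Finset.sum_ite_eq' Finset.univ u0]
    rw [if_pos (Finset.mem_univ u0)]
  rw [hLHS, hRHS] at hML
  have hPL : ((((colorings l B).filter fun V => V j0 = u0).card : ℕ) : ℝ) * (l : ℝ)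
      = ((B u0 : ℕ) : ℝ) * (((colorings l B).card : ℕ) : ℝ) := by
    exact_mod_cast congrArg (Nat.cast : ℕ → ℝ) (card_filter_mul B j0 u0)
  linear_combination (-(l : ℝ)) * hML + (((l + b).choose (b + 1) : ℕ) : ℝ) * hPL

end Aux4

/-- Intertwining identity for the general urn particle system (kernel form of
`𝒱Ĝ = G𝒱`): for `B ∈ ℕ^c` with `l = ∑_u B_u ≥ 1`, a finitely supported probability
vector `p` on the positive integers, and any function `h` on colorings of length
`l + b` for all `b ≥ 1`,
`∑_{b≥1} (p(b)/binom(l+b,b+1)) ∑_{S ⊆ [l+b], |S|=b+1} E_{V∼μ_B}[h(σ(V,S))]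
  = ∑_{u=1}^{c} (B_u/l) ∑_{b≥1} p(b) E_{W∼μ_{θ_{u,b}(B)}}[h(W)]`. -/
theorem intertwining_identity {c : ℕ} [NeZero c] (B : Fin c → ℕ)
    (l : ℕ) (hl : l = ∑ u, B u) (hl1 : 1 ≤ l)
    (p : ℕ → ℝ) (hp0 : p 0 = 0) (hpnn : ∀ b, 0 ≤ p b)
    (hpfin : (Function.support p).Finite) (hpsum : ∑' b, p b = 1)
    (h : (m : ℕ) → (Fin m → Fin c) → ℝ) :
    ∑' b : ℕ, (p b / ((l + b).choose (b + 1) : ℕ)) *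
        ∑ S ∈ (Finset.univ : Finset (Fin (l + b))).powersetCard (b + 1),
          unifExp l B (fun V => h (l + b) (sigmaStep V S))
      = ∑ u : Fin c, ((B u : ℝ) / l) *
          ∑' b : ℕ, p b * unifExp (l + b) (theta B u b) (h (l + b)) := by
  classical
  have hN : 0 < (colorings l B).card :=
    Finset.card_pos.2 (colorings_nonempty l B hl)
  have key : ∀ b : ℕ,
      (p b / ((l + b).choose (b + 1) : ℕ)) *
        ∑ S ∈ (Finset.univ : Finset (Fin (l + b))).powersetCard (b + 1),
          unifExp l B (fun V => h (l + b) (sigmaStep V S))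
      = ∑ u : Fin c, ((B u : ℝ) / l) *
          (p b * unifExp (l + b) (theta B u b) (h (l + b))) := by
    intro b
    rcases Nat.eq_zero_or_pos b with rfl | hb
    · simp [hp0]
    · have hNθ : ∀ u : Fin c, 0 < (colorings (l + b) (theta B u b)).card := by
        intro u
        refine Finset.card_pos.2 (colorings_nonempty (l + b) (theta B u b) ?_)
        rw [sum_theta, ← hl]
      have hC : 0 < (l + b).choose (b + 1) := Nat.choose_pos (by omega)
      simp only [unifExp]
      rw [← Finset.sum_div, ML B b hl1 (h (l + b)), Finset.sum_div, Finset.mul_sum]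
      refine Finset.sum_congr rfl fun u _ => ?_
      have hkey := scalar_id B l b hl hl1 hb u
      have hCne : (((l + b).choose (b + 1) : ℕ) : ℝ) ≠ 0 := by
        exact_mod_cast hC.ne'
      have hNne : ((colorings l B).card : ℝ) ≠ 0 := by exact_mod_cast hN.ne'
      have hNθne : ((colorings (l + b) (theta B u b)).card : ℝ) ≠ 0 := by
        exact_mod_cast (hNθ u).ne'
      have hlne : (l : ℝ) ≠ 0 := by exact_mod_cast hl1.trans_lt' Nat.zero_lt_one |>.ne'
      field_simp
      linear_combination (p b * (∑ W ∈ colorings (l + b) (theta B u b), h (l + b) W)) * hkey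
  rw [tsum_congr key]
  have hsummable : ∀ u : Fin c,
      Summable (fun b => ((B u : ℝ) / l) *
        (p b * unifExp (l + b) (theta B u b) (h (l + b)))) := by
    intro u
    refine summable_of_ne_finset_zero (s := hpfin.toFinset) fun b hb => ?_
    have : p b = 0 := by
      by_contra hpb
      exact hb (hpfin.mem_toFinset.2 hpb)
    simp [this]
  rw [Summable.tsum_finsetSum fun u _ => hsummable u]
  refine Finset.sum_congr rfl fun u _ => ?_
  rw [← tsum_mul_left]
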